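/- Let q₀, q₁ be quaternions with q₁ ≠ q₀ᶜ. Then the quaternionic polynomial P(x) = x² − x(q₀ + q₁) + q₀q₁ vanishes at x = q₀ and at x = (q₁ − q₀ᶜ)⁻¹ · q₁ · (q₁ − q₀ᶜ). -/
import Mathlib


/-- The roots of the quaternionic polynomial `x² − x(q₀ + q₁) + q₀q₁` when
`q₁ ≠ q₀ᶜ`: it vanishes at `q₀` and at `(q₁ − q₀ᶜ)⁻¹ q₁ (q₁ − q₀ᶜ)`. -/
theorem roots_of_quadratic_regular_polynomial (q₀ q₁ : Quaternion ℝ)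
    (h : q₁ ≠ star q₀) :
    q₀^2 - q₀ * (q₀ + q₁) + q₀ * q₁ = 0 ∧
    (let p := (q₁ - star q₀)⁻¹ * q₁ * (q₁ - star q₀);
      p^2 - p * (q₀ + q₁) + q₀ * q₁ = 0) := by
  constructor
  · noncomm_ring
  · set a := q₁ - star q₀ with ha
    have ha0 : a ≠ 0 := sub_ne_zero.mpr h
    have hinv : a⁻¹ * a = 1 := inv_mul_cancel₀ ha0
    have hmul : a * a⁻¹ = 1 := mul_inv_cancel₀ ha0
    have e1 : q₁ * (star q₀ * q₀) = (star q₀ * q₀) * q₁ := by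
      rw [Quaternion.star_mul_self]
      exact (Quaternion.coe_commutes _ _).symm
    have e2 : q₁ * (q₀ + star q₀) = (q₀ + star q₀) * q₁ := by
      rw [Quaternion.self_add_star']
      exact (Quaternion.coe_commutes _ _).symm
    have key : q₁^2 * a - q₁ * a * (q₀ + q₁) + a * (q₀ * q₁) = 0 := by
      rw [ha]
      calc q₁^2 * (q₁ - star q₀) - q₁ * (q₁ - star q₀) * (q₀ + q₁)
            + (q₁ - star q₀) * (q₀ * q₁)
          = (q₁ * (star q₀ * q₀) - (star q₀ * q₀) * q₁)
            + (q₁ * ((q₀ + star q₀) * q₁) - q₁^2 * (q₀ + star q₀)) := by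
            noncomm_ring
        _ = 0 := by
            have e3 : q₁^2 * (q₀ + star q₀) = (q₀ + star q₀) * q₁^2 := by
              rw [sq, mul_assoc, e2, ← mul_assoc, e2, mul_assoc]
            rw [e1, ← mul_assoc, e2, e3]; noncomm_ring
    show (a⁻¹ * q₁ * a)^2 - (a⁻¹ * q₁ * a) * (q₀ + q₁) + q₀ * q₁ = 0
    have hp2 : (a⁻¹ * q₁ * a)^2 = a⁻¹ * q₁^2 * a := by
      calc (a⁻¹ * q₁ * a)^2 = a⁻¹ * q₁ * (a * a⁻¹) * q₁ * a := by noncomm_ring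
        _ = a⁻¹ * q₁^2 * a := by rw [hmul]; noncomm_ring
    have key2 : a⁻¹ * (q₁^2 * a - q₁ * a * (q₀ + q₁) + a * (q₀ * q₁)) = 0 := by
      rw [key, mul_zero]
    rw [hp2]
    calc a⁻¹ * q₁^2 * a - a⁻¹ * q₁ * a * (q₀ + q₁) + q₀ * q₁
        = a⁻¹ * (q₁^2 * a - q₁ * a * (q₀ + q₁) + a * (q₀ * q₁))
          + (1 - a⁻¹ * a) * (q₀ * q₁) := by noncomm_ring
      _ = 0 := by rw [key2, hinv]; noncomm_ring
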